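/- Let a1 < a2 < a3 and let L be the matrix-valued function on {(X,Y): X>0, Y>0, X+Y<1} given by rows (A,B;C,D) with A = (a3-a1)X+a1, B = (a3-a2)X, C = (a3-a1)Y, D = (a3-a2)Y+a2. Then the two eigenvalue functions λ1(X,Y) < λ2(X,Y) of L are functionally independent: the map (X,Y) ↦ (λ1,λ2) has everywhere invertible Jacobian. -/

import Mathlib

noncomputable def Jequiv (e f g h : ℝ) (hd : e * h - f * g ≠ 0) :
    (ℝ × ℝ) ≃L[ℝ] (ℝ × ℝ) :=
  LinearEquiv.toContinuousLinearEquiv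
    { toFun := fun v => (e * v.1 + f * v.2, g * v.1 + h * v.2)
      map_add' := fun x y => by simp [Prod.ext_iff]; constructor <;> ring
      map_smul' := fun c x => by simp [Prod.ext_iff, smul_eq_mul]; constructor <;> ring
      invFun := fun w => ((h * w.1 - f * w.2) / (e * h - f * g),
                          (e * w.2 - g * w.1) / (e * h - f * g))
      left_inv := fun v => by
        simp only [Prod.ext_iff]; constructor <;> (rw [div_eq_iff hd]; ring)
      right_inv := fun w => by
        simp only [Prod.ext_iff]; constructor <;>
          (rw [mul_div_assoc', mul_div_assoc', ← add_div, div_eq_iff hd]; ring) }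

lemma Jequiv_apply (e f g h : ℝ) (hd : e * h - f * g ≠ 0) (v : ℝ × ℝ) :
    (Jequiv e f g h hd : (ℝ × ℝ) →L[ℝ] (ℝ × ℝ)) v
      = (e * v.1 + f * v.2, g * v.1 + h * v.2) := by
  simp [Jequiv]

theorem spheroconical_eigenvalues_functionally_independent
    (a1 a2 a3 : ℝ) (h12 : a1 < a2) (h23 : a2 < a3)
    (S : Set (ℝ × ℝ)) (hS : S = {p : ℝ × ℝ | 0 < p.1 ∧ 0 < p.2 ∧ p.1 + p.2 < 1})
    (A B C D : ℝ × ℝ → ℝ)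
    (hA : ∀ p : ℝ × ℝ, A p = (a3 - a1) * p.1 + a1)
    (hB : ∀ p : ℝ × ℝ, B p = (a3 - a2) * p.1)
    (hC : ∀ p : ℝ × ℝ, C p = (a3 - a1) * p.2)
    (hD : ∀ p : ℝ × ℝ, D p = (a3 - a2) * p.2 + a2)
    (lam1 lam2 : ℝ × ℝ → ℝ)
    (hroot1 : ∀ p ∈ S, lam1 p ^ 2 - (A p + D p) * lam1 p + (A p * D p - B p * C p) = 0)
    (hroot2 : ∀ p ∈ S, lam2 p ^ 2 - (A p + D p) * lam2 p + (A p * D p - B p * C p) = 0)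
    (hlt : ∀ p ∈ S, lam1 p < lam2 p) :
    ∀ p ∈ S, ∃ J : (ℝ × ℝ) ≃L[ℝ] (ℝ × ℝ),
      HasFDerivAt (fun p' : ℝ × ℝ => (lam1 p', lam2 p'))
        (J : (ℝ × ℝ) →L[ℝ] (ℝ × ℝ)) p := by
  intro p hp
  -- abbreviations
  have hα : (0:ℝ) < a3 - a1 := by linarith
  have hβ : (0:ℝ) < a3 - a2 := by linarith
  have hγ : (0:ℝ) < a2 - a1 := by linarith
  have hpS := hp
  rw [hS] at hpS
  obtain ⟨hX, hY, hXY⟩ := hpS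
  -- the Δ function and the smooth model g
  set Δf : ℝ × ℝ → ℝ := fun q =>
    ((a3 - a1) * q.1 - (a3 - a2) * q.2 - (a2 - a1))
        * ((a3 - a1) * q.1 - (a3 - a2) * q.2 - (a2 - a1))
      + 4 * (a3 - a1) * (a3 - a2) * (q.1 * q.2) with hΔf
  set Tf : ℝ × ℝ → ℝ := fun q =>
    (a3 - a1) * q.1 + (a3 - a2) * q.2 + (a1 + a2) with hTf
  -- on S, lam1 and lam2 agree with explicit formulas
  have key : ∀ q ∈ S, lam1 q = 2⁻¹ * (Tf q - Real.sqrt (Δf q))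
      ∧ lam2 q = 2⁻¹ * (Tf q + Real.sqrt (Δf q)) := by
    intro q hq
    have h1 := hroot1 q hq
    have h2 := hroot2 q hq
    have hl := hlt q hq
    rw [hA, hB, hC, hD] at h1 h2
    have hsum : lam1 q + lam2 q = Tf q := by
      have hne : lam1 q - lam2 q ≠ 0 := by
        intro h; nlinarith
      have hfac : (lam1 q - lam2 q) * (lam1 q + lam2 q - Tf q) = 0 := by
        simp only [hTf]
        linear_combination h1 - h2
      rcases mul_eq_zero.1 hfac with h | h
      · exact absurd h hne
      · linarith
    have hprod : lam1 q * lam2 q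
        = ((a3 - a1) * q.1 + a1) * ((a3 - a2) * q.2 + a2)
          - (a3 - a2) * q.1 * ((a3 - a1) * q.2) := by
      simp only [hTf] at hsum
      linear_combination (-1) * h1 + lam1 q * hsum
    have hdq : (lam2 q - lam1 q) ^ 2 = Δf q := by
      simp only [hTf] at hsum
      simp only [hΔf]
      linear_combination (lam1 q + lam2 q + ((a3 - a1) * q.1 + (a3 - a2) * q.2 + (a1 + a2))) * hsum
        - 4 * hprod
    have hsq : Real.sqrt (Δf q) = lam2 q - lam1 q := by
      rw [← hdq, Real.sqrt_sq (by linarith)]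
    constructor <;> (rw [hsq]; simp only [hTf] at hsum ⊢; linarith)
  -- positivity of Δ at p
  have hΔp : 0 < Δf p := by
    have h1 : 0 ≤ ((a3 - a1) * p.1 - (a3 - a2) * p.2 - (a2 - a1))
        * ((a3 - a1) * p.1 - (a3 - a2) * p.2 - (a2 - a1)) := mul_self_nonneg _
    have h2 : 0 < 4 * (a3 - a1) * (a3 - a2) * (p.1 * p.2) := by positivity
    simp only [hΔf]; linarith
  set sΔ : ℝ := Real.sqrt (Δf p) with hsΔdef
  have hsΔ : 0 < sΔ := Real.sqrt_pos.2 hΔp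
  -- partial derivatives of Δ at p
  set u : ℝ := 2 * ((a3 - a1) * p.1 - (a3 - a2) * p.2 - (a2 - a1)) * (a3 - a1)
      + 4 * (a3 - a1) * (a3 - a2) * p.2 with hu
  set v : ℝ := -(2 * ((a3 - a1) * p.1 - (a3 - a2) * p.2 - (a2 - a1)) * (a3 - a2))
      + 4 * (a3 - a1) * (a3 - a2) * p.1 with hv
  -- entries of the Jacobian
  set e1 : ℝ := ((a3 - a1) - u / (2 * sΔ)) / 2 with he1
  set f1 : ℝ := ((a3 - a2) - v / (2 * sΔ)) / 2 with hf1
  set g1 : ℝ := ((a3 - a1) + u / (2 * sΔ)) / 2 with hg1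
  set h1 : ℝ := ((a3 - a2) + v / (2 * sΔ)) / 2 with hh1
  have hdet : e1 * h1 - f1 * g1 = (a3 - a1) * (a3 - a2) * (a2 - a1) / sΔ := by
    simp only [he1, hf1, hg1, hh1, hu, hv]
    field_simp
    ring
  have hd : e1 * h1 - f1 * g1 ≠ 0 := by
    rw [hdet]
    positivity
  refine ⟨Jequiv e1 f1 g1 h1 hd, ?_⟩
  -- derivative of the model function
  have hWd : HasFDerivAt (fun q : ℝ × ℝ =>
      (a3 - a1) * q.1 - (a3 - a2) * q.2 - (a2 - a1))
      (((a3 - a1) • ContinuousLinearMap.fst ℝ ℝ ℝ)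
        - ((a3 - a2) • ContinuousLinearMap.snd ℝ ℝ ℝ)) p := by
    exact ((hasFDerivAt_fst.const_mul _).sub (hasFDerivAt_snd.const_mul _)).sub_const _
  have hΔd : HasFDerivAt Δf
      (((2 * ((a3 - a1) * p.1 - (a3 - a2) * p.2 - (a2 - a1))) •
          (((a3 - a1) • ContinuousLinearMap.fst ℝ ℝ ℝ)
            - ((a3 - a2) • ContinuousLinearMap.snd ℝ ℝ ℝ)))
        + ((4 * (a3 - a1) * (a3 - a2)) •
            (p.1 • ContinuousLinearMap.snd ℝ ℝ ℝ
              + p.2 • ContinuousLinearMap.fst ℝ ℝ ℝ))) p := by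
    have h2 : HasFDerivAt (fun q : ℝ × ℝ => q.1 * q.2)
        (p.1 • ContinuousLinearMap.snd ℝ ℝ ℝ + p.2 • ContinuousLinearMap.fst ℝ ℝ ℝ) p :=
      hasFDerivAt_fst.mul hasFDerivAt_snd
    have hW2 := hWd.mul hWd
    have := hW2.add (h2.const_mul (4 * (a3 - a1) * (a3 - a2)))
    simp only [hΔf]
    refine this.congr_fderiv ?_
    refine ContinuousLinearMap.ext fun w => ?_
    simp only [ContinuousLinearMap.add_apply, ContinuousLinearMap.sub_apply,
      ContinuousLinearMap.smul_apply, ContinuousLinearMap.coe_fst',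
      ContinuousLinearMap.coe_snd', smul_eq_mul]
    ring
  have hTd : HasFDerivAt Tf
      (((a3 - a1) • ContinuousLinearMap.fst ℝ ℝ ℝ)
        + ((a3 - a2) • ContinuousLinearMap.snd ℝ ℝ ℝ)) p := by
    simp only [hTf]
    exact ((hasFDerivAt_fst.const_mul _).add (hasFDerivAt_snd.const_mul _)).add_const _
  have hsqd := hΔd.sqrt hΔp.ne'
  have hG : HasFDerivAt (fun q : ℝ × ℝ =>
      (2⁻¹ * (Tf q - Real.sqrt (Δf q)), 2⁻¹ * (Tf q + Real.sqrt (Δf q))))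
      ((Jequiv e1 f1 g1 h1 hd : (ℝ × ℝ) →L[ℝ] (ℝ × ℝ))) p := by
    have := HasFDerivAt.prodMk ((hTd.sub hsqd).const_mul (2:ℝ)⁻¹) ((hTd.add hsqd).const_mul (2:ℝ)⁻¹)
    refine this.congr_fderiv ?_
    refine ContinuousLinearMap.ext fun w => ?_
    rw [Jequiv_apply]
    simp only [ContinuousLinearMap.prod_apply, ContinuousLinearMap.add_apply,
      ContinuousLinearMap.sub_apply, ContinuousLinearMap.smul_apply,
      ContinuousLinearMap.coe_fst', ContinuousLinearMap.coe_snd',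
      ContinuousLinearMap.coe_smul', Pi.smul_apply, smul_eq_mul]
    have hΔps : Real.sqrt (Δf p) = sΔ := hsΔdef.symm
    refine Prod.ext ?_ ?_ <;>
      · simp only [he1, hf1, hg1, hh1, hu, hv, hΔps]
        field_simp
        ring
  -- transfer along local equality
  have hSopen : IsOpen S := by
    rw [hS]
    exact (isOpen_lt continuous_const continuous_fst).inter
      ((isOpen_lt continuous_const continuous_snd).inter
        (isOpen_lt (continuous_fst.add continuous_snd) continuous_const))
  have heq : (fun q : ℝ × ℝ => (lam1 q, lam2 q)) =ᶠ[nhds p]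
      (fun q : ℝ × ℝ =>
        (2⁻¹ * (Tf q - Real.sqrt (Δf q)), 2⁻¹ * (Tf q + Real.sqrt (Δf q)))) := by
    filter_upwards [hSopen.mem_nhds hp] with q hq
    obtain ⟨k1, k2⟩ := key q hq
    rw [k1, k2]
  exact hG.congr_of_eventuallyEq heq
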